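/- Let f be an even integrable symbol on the unit circle with Fourier coefficients f_j. Then det(f_{j−k} + f_{j+k+1})_{j,k=0}^{n−1} = (2^{n²−n}/π^n) D_n^H(f(e^{iθ(x)}) √((1+x)/(1−x))), with x = cos θ and D_n^H the Hankel determinant on [−1,1]. -/

import Mathlib

open MeasureTheory

open scoped Real

/-- Fourier coefficient of a symbol `g(θ)` (standing for `g(e^{iθ})`). -/
noncomputable def circleCoeff (g : ℝ → ℂ) (j : ℤ) : ℂ :=
  (1 / (2 * (π : ℂ))) *
    ∫ θ in (0:ℝ)..(2 * π), g θ * Complex.exp (-(j * θ) * Complex.I)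

/-- Hankel determinant of a weight `w` on `[-1,1]`. -/
noncomputable def hankelDet (w : ℝ → ℂ) (n : ℕ) : ℂ :=
  Matrix.det (Matrix.of fun j k : Fin n =>
    ∫ x in (-1:ℝ)..1, (x : ℂ)^((j : ℕ) + (k : ℕ)) * w x)

namespace TPH

open Polynomial

/-- Chebyshev polynomials of the third kind. -/
noncomputable def Vp : ℕ → Polynomial ℝ
  | 0 => 1
  | 1 => Polynomial.C 2 * Polynomial.X - 1
  | (n+2) => Polynomial.C 2 * (Polynomial.X * Vp (n+1)) - Vp n

lemma Vp_natDegree_le (n : ℕ) : (Vp n).natDegree ≤ n := by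
  induction n using Nat.twoStepInduction with
  | zero => simp [Vp]
  | one =>
      refine (Polynomial.natDegree_sub_le _ _).trans ?_
      simp [Polynomial.natDegree_C_mul_le]
  | more n ih1 ih2 =>
      show (Polynomial.C 2 * (Polynomial.X * Vp (n+1)) - Vp n).natDegree ≤ n + 2
      refine (Polynomial.natDegree_sub_le _ _).trans (max_le ?_ (ih1.trans (by omega)))
      refine (Polynomial.natDegree_C_mul_le _ _).trans ?_
      refine (Polynomial.natDegree_mul_le).trans ?_
      simpa using by omega
      
lemma Vp_coeff_diag (n : ℕ) : (Vp n).coeff n = 2 ^ n := by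
  induction n using Nat.twoStepInduction with
  | zero => simp [Vp]
  | one => simp [Vp, Polynomial.coeff_sub, Polynomial.coeff_C_mul, Polynomial.coeff_one]
  | more n ih1 ih2 =>
      have h0 : (Vp n).coeff (n + 2) = 0 :=
        Polynomial.coeff_eq_zero_of_natDegree_lt (lt_of_le_of_lt (Vp_natDegree_le n) (by omega))
      rw [show Vp (n+2) = Polynomial.C 2 * (Polynomial.X * Vp (n+1)) - Vp n from rfl]
      rw [Polynomial.coeff_sub, h0, Polynomial.coeff_C_mul, Polynomial.coeff_X_mul, ih2]
      ring

lemma Vp_coeff_eq_zero {n m : ℕ} (h : n < m) : (Vp n).coeff m = 0 :=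
  Polynomial.coeff_eq_zero_of_natDegree_lt (lt_of_le_of_lt (Vp_natDegree_le n) h)

lemma Vp_cos (n : ℕ) (θ : ℝ) :
    Real.cos (θ / 2) * (Vp n).eval (Real.cos θ) = Real.cos (((n : ℝ) + 1/2) * θ) := by
  induction n using Nat.twoStepInduction with
  | zero =>
      rw [show (((0:ℕ):ℝ) + 1/2) * θ = θ/2 by push_cast; ring]
      simp [Vp]
  | one =>
      have h2 : Real.cos θ = Real.cos (θ/2)^2 - Real.sin (θ/2)^2 := by
        rw [show θ = θ/2 + θ/2 by ring, Real.cos_add]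
        rw [show (θ/2 + θ/2)/2 = θ/2 by ring]
        ring
      have h3 : Real.cos ((((1:ℕ):ℝ) + 1/2) * θ)
          = Real.cos (θ/2)^3 - 3 * Real.sin (θ/2)^2 * Real.cos (θ/2) := by
        have h : (((1:ℕ):ℝ) + 1/2) * θ = θ/2 + (θ/2 + θ/2) := by push_cast; ring
        rw [h, Real.cos_add, Real.cos_add, Real.sin_add]; ring
      simp only [Vp, Polynomial.eval_sub, Polynomial.eval_mul, Polynomial.eval_C,
        Polynomial.eval_X, Polynomial.eval_one]
      rw [h3, h2]
      linear_combination Real.cos (θ/2) * Real.sin_sq_add_cos_sq (θ/2)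
  | more n ih1 ih2 =>
      have key : ∀ a b : ℝ, Real.cos (a + b) + Real.cos (a - b) = 2 * Real.cos a * Real.cos b := by
        intro a b; rw [Real.cos_add, Real.cos_sub]; ring
      have h1 : (((n+2:ℕ)):ℝ) + 1/2 = (((n+1:ℕ)):ℝ) + 1/2 + 1 := by push_cast; ring
      have h2 : (((((n+1:ℕ)):ℝ) + 1/2 + 1)) * θ = ((((n+1:ℕ)):ℝ) + 1/2) * θ + θ := by ring
      have h3 : ((((n+1:ℕ)):ℝ) + 1/2) * θ - θ = (((n:ℕ):ℝ) + 1/2) * θ := by push_cast; ring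
      have hk := key (((((n+1:ℕ)):ℝ) + 1/2) * θ) θ
      rw [h3] at hk
      rw [show Vp (n+2) = Polynomial.C 2 * (Polynomial.X * Vp (n+1)) - Vp n from rfl]
      simp only [Polynomial.eval_sub, Polynomial.eval_mul, Polynomial.eval_C,
        Polynomial.eval_X]
      rw [h1, h2]
      have h4 : Real.cos ((((n+1:ℕ):ℝ) + 1/2) * θ + θ)
          = 2 * Real.cos ((((n+1:ℕ):ℝ) + 1/2) * θ) * Real.cos θ
            - Real.cos ((((n:ℕ):ℝ) + 1/2) * θ) := by linarith
      rw [h4, ← ih2, ← ih1]; ring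

lemma cos_image_Ioo : Real.cos '' Set.Ioo 0 π = Set.Ioo (-1) 1 := by
  ext x
  constructor
  · rintro ⟨θ, ⟨h0, hπ⟩, rfl⟩
    constructor
    · have := Real.strictAntiOn_cos ⟨le_of_lt h0, le_of_lt hπ⟩
        ⟨Real.pi_pos.le, le_refl _⟩ hπ
      simpa [Real.cos_pi] using this
    · have := Real.strictAntiOn_cos (Set.left_mem_Icc.2 Real.pi_pos.le)
        ⟨le_of_lt h0, le_of_lt hπ⟩ h0
      simpa [Real.cos_zero] using this
  · rintro ⟨h1, h2⟩
    refine ⟨Real.arccos x, ⟨Real.arccos_pos.2 h2, ?_⟩, Real.cos_arccos h1.le h2.le⟩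
    exact lt_of_le_of_ne (Real.arccos_le_pi x) (fun h => by
      have := Real.arccos_eq_pi.1 h; linarith)

/-- Change of variables `x = cos θ`. -/
lemma integral_cos_subst (G : ℝ → ℂ) (H : ℝ → ℂ)
    (hpt : ∀ θ ∈ Set.Ioo (0:ℝ) π, (Real.sin θ : ℂ) * G (Real.cos θ) = H θ) :
    ∫ x in (-1:ℝ)..1, G x = ∫ θ in (0:ℝ)..π, H θ := by
  have hπ : (0:ℝ) ≤ π := Real.pi_pos.le
  have hmeas : MeasurableSet (Set.Ioo (0:ℝ) π) := measurableSet_Ioo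
  have hderiv : ∀ θ ∈ Set.Ioo (0:ℝ) π,
      HasDerivWithinAt Real.cos (-Real.sin θ) (Set.Ioo (0:ℝ) π) θ :=
    fun θ _ => (Real.hasDerivAt_cos θ).hasDerivWithinAt
  have hinj : Set.InjOn Real.cos (Set.Ioo (0:ℝ) π) :=
    Real.injOn_cos.mono Set.Ioo_subset_Icc_self
  have himg := integral_image_eq_integral_abs_deriv_smul hmeas hderiv hinj G
  rw [cos_image_Ioo] at himg
  rw [intervalIntegral.integral_of_le (by linarith : (-1:ℝ) ≤ 1),
    integral_Ioc_eq_integral_Ioo, himg,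
    intervalIntegral.integral_of_le hπ, integral_Ioc_eq_integral_Ioo]
  refine setIntegral_congr_fun hmeas (fun θ hθ => ?_)
  have hs : 0 < Real.sin θ := Real.sin_pos_of_pos_of_lt_pi hθ.1 hθ.2
  rw [← hpt θ hθ]
  rw [abs_of_nonpos (by linarith), neg_neg]
  simp [Complex.real_smul]

end TPH

open TPH Polynomial

set_option maxHeartbeats 1000000 in
/-- Toeplitz+Hankel identity:
`det(f_{j-k} + f_{j+k+1}) = (2^{n²-n}/πⁿ) D_n^H(f(e^{iθ(x)})√((1+x)/(1-x)))`. -/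
theorem toeplitz_plus_hankel_type3 (g : ℝ → ℂ)
    (hint : IntervalIntegrable g MeasureTheory.volume 0 (2 * π))
    (heven : ∀ θ, g (-θ) = g θ) (hper : Function.Periodic g (2 * π))
    (hmom : ∀ m : ℕ, IntervalIntegrable
      (fun x : ℝ => (x : ℂ)^m * (g (Real.arccos x) * (Real.sqrt ((1 + x) / (1 - x)) : ℂ)))
      MeasureTheory.volume (-1) 1)
    (n : ℕ) :
    Matrix.det (Matrix.of fun j k : Fin n =>
        circleCoeff g ((j : ℤ) - (k : ℤ)) + circleCoeff g ((j : ℤ) + (k : ℤ) + 1))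
      = ((2 : ℂ)^((n : ℤ)^2 - (n : ℤ)) / (π : ℂ)^n) *
          hankelDet (fun x => g (Real.arccos x) * (Real.sqrt ((1 + x) / (1 - x)) : ℂ)) n := by
  classical
  set w : ℝ → ℂ := fun x => g (Real.arccos x) * (Real.sqrt ((1 + x) / (1 - x)) : ℂ) with hw
  have hπpos : (0:ℝ) < π := Real.pi_pos
  -- integrability of g against continuous functions on subintervals of [0, 2π]
  have hsub : Set.uIcc (0:ℝ) π ⊆ Set.uIcc (0:ℝ) (2*π) := by
    rw [Set.uIcc_of_le hπpos.le, Set.uIcc_of_le (by linarith)]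
    exact Set.Icc_subset_Icc le_rfl (by linarith)
  have hsub2 : Set.uIcc (π:ℝ) (2*π) ⊆ Set.uIcc (0:ℝ) (2*π) := by
    rw [Set.uIcc_of_le (by linarith), Set.uIcc_of_le (by linarith)]
    exact Set.Icc_subset_Icc (by linarith) le_rfl
  -- Step 1: cosine formula for the Fourier coefficients
  have hcoeff : ∀ m : ℤ, circleCoeff g m
      = (1 / (π:ℂ)) * ∫ θ in (0:ℝ)..π, g θ * (Real.cos (m * θ) : ℂ) := by
    intro m
    have hcont1 : Continuous fun θ : ℝ => Complex.exp (-((m:ℂ) * (θ:ℂ)) * Complex.I) := by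
      fun_prop
    have hcont2 : Continuous fun θ : ℝ => Complex.exp (((m:ℂ) * (θ:ℂ)) * Complex.I) := by
      fun_prop
    have hF2 : IntervalIntegrable
        (fun θ : ℝ => g θ * Complex.exp (-((m:ℂ) * (θ:ℂ)) * Complex.I)) volume 0 (2*π) :=
      hint.mul_continuousOn hcont1.continuousOn
    have hFa : IntervalIntegrable
        (fun θ : ℝ => g θ * Complex.exp (-((m:ℂ) * (θ:ℂ)) * Complex.I)) volume 0 π :=
      hF2.mono_set hsub
    have hFb : IntervalIntegrable
        (fun θ : ℝ => g θ * Complex.exp (-((m:ℂ) * (θ:ℂ)) * Complex.I)) volume π (2*π) :=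
      hF2.mono_set hsub2
    have hG : IntervalIntegrable
        (fun θ : ℝ => g θ * Complex.exp (((m:ℂ) * (θ:ℂ)) * Complex.I)) volume 0 π :=
      (hint.mul_continuousOn hcont2.continuousOn).mono_set hsub
    rw [circleCoeff]
    rw [← intervalIntegral.integral_add_adjacent_intervals hFa hFb]
    have hrefl : (∫ θ in (π:ℝ)..(2*π), g θ * Complex.exp (-((m:ℂ) * (θ:ℂ)) * Complex.I))
        = ∫ θ in (0:ℝ)..π, g θ * Complex.exp (((m:ℂ) * (θ:ℂ)) * Complex.I) := by
      have h := intervalIntegral.integral_comp_sub_left (a := (0:ℝ)) (b := π)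
        (fun θ : ℝ => g θ * Complex.exp (-((m:ℂ) * (θ:ℂ)) * Complex.I)) (2*π)
      rw [show 2*π - π = π by ring, show 2*π - (0:ℝ) = 2*π by ring] at h
      rw [← h]
      refine intervalIntegral.integral_congr fun θ _ => ?_
      show g (2*π - θ) * Complex.exp (-((m:ℂ) * ((2*π - θ : ℝ):ℂ)) * Complex.I) = _
      have hg : g (2*π - θ) = g θ := by
        have h2 := hper (-θ)
        rw [show -θ + 2*π = 2*π - θ by ring] at h2
        rw [h2, heven]
      have he : Complex.exp (-((m:ℂ) * ((2*π - θ : ℝ):ℂ)) * Complex.I)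
          = Complex.exp (((m:ℂ) * (θ:ℂ)) * Complex.I) := by
        rw [show (-((m:ℂ) * ((2*π - θ : ℝ):ℂ)) * Complex.I)
            = ((m:ℂ) * (θ:ℂ)) * Complex.I + ((-m : ℤ):ℂ) * (2 * (π:ℂ) * Complex.I) by
          push_cast; ring]
        rw [Complex.exp_add, Complex.exp_int_mul_two_pi_mul_I, mul_one]
      rw [hg, he]
    rw [hrefl, ← intervalIntegral.integral_add hFa hG]
    have hpoint : Set.EqOn
        (fun θ : ℝ => g θ * Complex.exp (-((m:ℂ) * (θ:ℂ)) * Complex.I)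
          + g θ * Complex.exp (((m:ℂ) * (θ:ℂ)) * Complex.I))
        (fun θ : ℝ => (2:ℂ) * (g θ * (Real.cos (m * θ) : ℂ)))
        (Set.uIcc (0:ℝ) π) := by
      intro θ _
      have hexp : Complex.exp (((m:ℂ) * (θ:ℂ)) * Complex.I)
          + Complex.exp (-((m:ℂ) * (θ:ℂ)) * Complex.I) = 2 * Complex.cos ((m:ℂ) * (θ:ℂ)) := by
        rw [Complex.cos]; ring
      have hcast : (Real.cos ((m:ℝ) * θ) : ℂ) = Complex.cos ((m:ℂ) * (θ:ℂ)) := by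
        rw [Complex.ofReal_cos]; push_cast; ring_nf
      show g θ * _ + g θ * _ = (2:ℂ) * (g θ * _)
      rw [hcast]
      linear_combination g θ * hexp
    rw [intervalIntegral.integral_congr hpoint, intervalIntegral.integral_const_mul]
    have hπne : (π:ℂ) ≠ 0 := Complex.ofReal_ne_zero.2 Real.pi_ne_zero
    field_simp
  -- Step 2: entry formula
  have hentry : ∀ j k : ℕ,
      circleCoeff g ((j:ℤ) - (k:ℤ)) + circleCoeff g ((j:ℤ) + (k:ℤ) + 1)
        = (1 / (π:ℂ)) * ∫ x in (-1:ℝ)..1,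
            (((Vp j).eval x : ℝ) : ℂ) * (((Vp k).eval x : ℝ) : ℂ) * w x := by
    intro j k
    have hgπ : IntervalIntegrable g volume 0 π := hint.mono_set hsub
    have hc1 : IntervalIntegrable
        (fun θ : ℝ => g θ * (Real.cos ((((j:ℤ) - (k:ℤ) : ℤ):ℝ) * θ) : ℂ)) volume 0 π :=
      hgπ.mul_continuousOn (by fun_prop)
    have hc2 : IntervalIntegrable
        (fun θ : ℝ => g θ * (Real.cos ((((j:ℤ) + (k:ℤ) + 1 : ℤ):ℝ) * θ) : ℂ)) volume 0 π :=
      hgπ.mul_continuousOn (by fun_prop)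
    have trig : ∀ θ : ℝ,
        Real.cos ((((j:ℤ) - (k:ℤ) : ℤ):ℝ) * θ) + Real.cos ((((j:ℤ) + (k:ℤ) + 1 : ℤ):ℝ) * θ)
          = (Vp j).eval (Real.cos θ) * (Vp k).eval (Real.cos θ) * (1 + Real.cos θ) := by
      intro θ
      have e1 := Vp_cos j θ
      have e2 := Vp_cos k θ
      have hcsq : 2 * Real.cos (θ/2)^2 = 1 + Real.cos θ := by
        have h := Real.cos_sq (θ/2)
        rw [show 2*(θ/2) = θ by ring] at h
        linarith
      have key : ∀ a b : ℝ,
          Real.cos (a - b) + Real.cos (a + b) = 2 * Real.cos a * Real.cos b := by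
        intro a b; rw [Real.cos_add, Real.cos_sub]; ring
      have h1 : (((j:ℤ) - (k:ℤ) : ℤ):ℝ) * θ = ((j:ℝ) + 1/2) * θ - ((k:ℝ) + 1/2) * θ := by
        push_cast; ring
      have h2 : (((j:ℤ) + (k:ℤ) + 1 : ℤ):ℝ) * θ = ((j:ℝ) + 1/2) * θ + ((k:ℝ) + 1/2) * θ := by
        push_cast; ring
      rw [h1, h2, key, ← e1, ← e2, ← hcsq]
      ring
    rw [hcoeff, hcoeff, ← mul_add, ← intervalIntegral.integral_add hc1 hc2]
    congr 1
    refine (integral_cos_subst _ _ ?_).symm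
    intro θ hθ
    have hcmem : Real.cos θ ∈ Set.Ioo (-1:ℝ) 1 := by
      rw [← cos_image_Ioo]; exact ⟨θ, hθ, rfl⟩
    have harc : Real.arccos (Real.cos θ) = θ := Real.arccos_cos hθ.1.le hθ.2.le
    have hsin : Real.sin θ * Real.sqrt ((1 + Real.cos θ)/(1 - Real.cos θ)) = 1 + Real.cos θ := by
      have h1 : (0:ℝ) < 1 - Real.cos θ := by linarith [hcmem.2]
      have h2 : (0:ℝ) ≤ 1 + Real.cos θ := by linarith [hcmem.1]
      have hs : Real.sin θ = Real.sqrt (1 - Real.cos θ^2) :=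
        Real.sin_eq_sqrt_one_sub_cos_sq hθ.1.le hθ.2.le
      rw [hs, ← Real.sqrt_mul (by nlinarith : (0:ℝ) ≤ 1 - Real.cos θ^2)]
      rw [show (1 - Real.cos θ^2) * ((1 + Real.cos θ)/(1 - Real.cos θ))
          = (1 + Real.cos θ)^2 by field_simp; ring]
      exact Real.sqrt_sq h2
    show (Real.sin θ : ℂ) * ((((Vp j).eval (Real.cos θ) : ℝ):ℂ)
        * (((Vp k).eval (Real.cos θ) : ℝ):ℂ) * w (Real.cos θ)) = _
    have hwc : w (Real.cos θ) = g θ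
        * (Real.sqrt ((1 + Real.cos θ)/(1 - Real.cos θ)) : ℂ) := by
      simp only [hw, harc]
    rw [hwc]
    have hcast1 : (Real.sin θ : ℂ) * (Real.sqrt ((1 + Real.cos θ)/(1 - Real.cos θ)) : ℂ)
        = 1 + (Real.cos θ : ℂ) := by exact_mod_cast hsin
    have hcast2 : ((Real.cos ((((j:ℤ) - (k:ℤ) : ℤ):ℝ) * θ) : ℝ):ℂ)
          + ((Real.cos ((((j:ℤ) + (k:ℤ) + 1 : ℤ):ℝ) * θ) : ℝ):ℂ)
        = (((Vp j).eval (Real.cos θ) : ℝ):ℂ) * (((Vp k).eval (Real.cos θ) : ℝ):ℂ)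
            * (1 + (Real.cos θ : ℂ)) := by exact_mod_cast trig θ
    show _ = g θ * _ + g θ * _
    linear_combination g θ * (((Vp j).eval (Real.cos θ) : ℝ):ℂ)
        * (((Vp k).eval (Real.cos θ) : ℝ):ℂ) * hcast1 - g θ * hcast2
  -- Step 3: moment expansion
  have hmomexp : ∀ j k : Fin n,
      (∫ x in (-1:ℝ)..1, (((Vp (j:ℕ)).eval x : ℝ) : ℂ) * (((Vp (k:ℕ)).eval x : ℝ) : ℂ) * w x)
        = ∑ m : Fin n, ∑ l : Fin n,
            (((Vp (j:ℕ)).coeff (m:ℕ) : ℝ) : ℂ) * (((Vp (k:ℕ)).coeff (l:ℕ) : ℝ) : ℂ) *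
              ∫ x in (-1:ℝ)..1, (x:ℂ)^((m:ℕ)+(l:ℕ)) * w x := by
    intro j k
    have hdegj : (Vp (j:ℕ)).natDegree < n := lt_of_le_of_lt (Vp_natDegree_le _) j.isLt
    have hdegk : (Vp (k:ℕ)).natDegree < n := lt_of_le_of_lt (Vp_natDegree_le _) k.isLt
    have hmom' : ∀ m : ℕ, IntervalIntegrable (fun x : ℝ => (x:ℂ)^m * w x) volume (-1) 1 := by
      intro m; simpa only [hw] using hmom m
    have hexp : ∀ x : ℝ, (((Vp (j:ℕ)).eval x : ℝ) : ℂ) * (((Vp (k:ℕ)).eval x : ℝ) : ℂ) * w x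
        = ∑ p ∈ Finset.range n ×ˢ Finset.range n,
            (((Vp (j:ℕ)).coeff p.1 : ℝ):ℂ) * (((Vp (k:ℕ)).coeff p.2 : ℝ):ℂ)
              * ((x:ℂ)^(p.1+p.2) * w x) := by
      intro x
      rw [Polynomial.eval_eq_sum_range' hdegj x, Polynomial.eval_eq_sum_range' hdegk x]
      push_cast
      rw [Finset.sum_mul_sum, Finset.sum_product]
      rw [Finset.sum_mul]
      refine Finset.sum_congr rfl fun m _ => ?_
      rw [Finset.sum_mul]
      refine Finset.sum_congr rfl fun l _ => ?_
      rw [pow_add]; ring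
    have hswap : ∀ fT : ℕ → ℕ → ℂ,
        (∑ m : Fin n, ∑ l : Fin n, fT (m:ℕ) (l:ℕ))
          = ∑ m ∈ Finset.range n, ∑ l ∈ Finset.range n, fT m l := by
      intro fT
      calc (∑ m : Fin n, ∑ l : Fin n, fT (m:ℕ) (l:ℕ))
          = ∑ m : Fin n, ∑ l ∈ Finset.range n, fT (m:ℕ) l :=
            Finset.sum_congr rfl fun m _ => Fin.sum_univ_eq_sum_range _ n
        _ = ∑ m ∈ Finset.range n, ∑ l ∈ Finset.range n, fT m l :=
            Fin.sum_univ_eq_sum_range (fun m => ∑ l ∈ Finset.range n, fT m l) n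
    rw [intervalIntegral.integral_congr (fun x _ => hexp x)]
    have hfs : (∫ x in (-1:ℝ)..1, ∑ p ∈ Finset.range n ×ˢ Finset.range n,
          (((Vp (j:ℕ)).coeff p.1 : ℝ):ℂ) * (((Vp (k:ℕ)).coeff p.2 : ℝ):ℂ)
            * ((x:ℂ)^(p.1+p.2) * w x))
        = ∑ p ∈ Finset.range n ×ˢ Finset.range n,
            ∫ x in (-1:ℝ)..1, (((Vp (j:ℕ)).coeff p.1 : ℝ):ℂ) * (((Vp (k:ℕ)).coeff p.2 : ℝ):ℂ)
              * ((x:ℂ)^(p.1+p.2) * w x) := by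
      refine intervalIntegral.integral_finset_sum (fun p _ => ?_)
      exact (hmom' (p.1+p.2)).const_mul _
    rw [hfs]
    rw [hswap (fun m l => (((Vp (j:ℕ)).coeff m : ℝ):ℂ) * (((Vp (k:ℕ)).coeff l : ℝ):ℂ) *
          ∫ x in (-1:ℝ)..1, (x:ℂ)^(m+l) * w x)]
    refine Eq.trans (Finset.sum_congr rfl fun p _ =>
      intervalIntegral.integral_const_mul _ _) ?_
    exact Finset.sum_product _ _ _
  -- Matrix shape
  set Cmat : Matrix (Fin n) (Fin n) ℂ :=
    Matrix.of fun j m : Fin n => ((Vp (j:ℕ)).coeff (m:ℕ) : ℂ) with hC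
  set Hmat : Matrix (Fin n) (Fin n) ℂ :=
    Matrix.of fun m l : Fin n => ∫ x in (-1:ℝ)..1, (x:ℂ)^((m:ℕ)+(l:ℕ)) * w x with hH
  have hA : (Matrix.of fun j k : Fin n =>
        circleCoeff g ((j : ℤ) - (k : ℤ)) + circleCoeff g ((j : ℤ) + (k : ℤ) + 1))
      = (1 / (π:ℂ)) • (Cmat * Hmat * Cmat.transpose) := by
    ext j k
    rw [Matrix.smul_apply, Matrix.of_apply, hentry j k, hmomexp j k, smul_eq_mul]
    congr 1
    have hmul : (Cmat * Hmat * Cmat.transpose) j k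
        = ∑ l : Fin n, ∑ m : Fin n, Cmat j m * Hmat m l * Cmat k l := by
      rw [Matrix.mul_apply]
      refine Finset.sum_congr rfl fun l _ => ?_
      rw [Matrix.mul_apply, Finset.sum_mul, Matrix.transpose_apply]
    rw [hmul, Finset.sum_comm]
    refine Finset.sum_congr rfl fun m _ => Finset.sum_congr rfl fun l _ => ?_
    simp only [hC, hH, Matrix.of_apply]
    ring
  have hdetC : Cmat.det = 2 ^ (∑ j ∈ Finset.range n, j) := by
    have htri : Cmat.BlockTriangular ⇑OrderDual.toDual := by
      intro i j hij
      show (((Vp (i:ℕ)).coeff (j:ℕ) : ℝ) : ℂ) = 0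
      rw [Vp_coeff_eq_zero (show (i:ℕ) < (j:ℕ) from hij)]
      simp
    rw [Matrix.det_of_lowerTriangular _ htri]
    calc ∏ i : Fin n, Cmat i i = ∏ i : Fin n, (2:ℂ) ^ (i:ℕ) := by
          refine Finset.prod_congr rfl (fun i _ => ?_)
          show (((Vp (i:ℕ)).coeff (i:ℕ) : ℝ) : ℂ) = _
          rw [Vp_coeff_diag]; push_cast; ring
      _ = (2:ℂ) ^ (∑ i : Fin n, (i:ℕ)) := Finset.prod_pow_eq_pow_sum _ _ _
      _ = _ := by rw [Fin.sum_univ_eq_sum_range (fun i => i) n]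
  rw [hA, Matrix.det_smul, Matrix.det_mul, Matrix.det_mul, Matrix.det_transpose, hdetC]
  rw [hankelDet]
  have hHdet : Hmat.det = Matrix.det (Matrix.of fun j k : Fin n =>
      ∫ x in (-1:ℝ)..1, (x : ℂ)^((j : ℕ) + (k : ℕ)) * w x) := rfl
  rw [← hHdet]
  have hcard : Fintype.card (Fin n) = n := Fintype.card_fin n
  rw [hcard]
  have hsum2 : (∑ j ∈ Finset.range n, j) * 2 = n^2 - n := by
    rw [Finset.sum_range_id_mul_two]
    cases n with
    | zero => rfl
    | succ m => simp [Nat.succ_sub_one]; ring_nf; omega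
  have hpow : ((2:ℂ) ^ (∑ j ∈ Finset.range n, j)) * ((2:ℂ) ^ (∑ j ∈ Finset.range n, j))
      = (2:ℂ) ^ (n^2 - n) := by
    rw [← pow_add, ← hsum2]; ring_nf
  have hzpow : (2:ℂ) ^ ((n:ℤ)^2 - (n:ℤ)) = (2:ℂ) ^ (n^2 - n : ℕ) := by
    rw [show ((n:ℤ)^2 - (n:ℤ)) = ((n^2 - n : ℕ) : ℤ) by
      have : n ≤ n^2 := Nat.le_self_pow (by norm_num) n
      push_cast [Nat.cast_sub this]; ring]
    exact zpow_natCast _ _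
  rw [hzpow, ← hpow]
  field_simp
  ring
  rw [← mul_pow, mul_inv_cancel₀ (Complex.ofReal_ne_zero.2 Real.pi_ne_zero), one_pow, one_mul]
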